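/- Let (W,S) be a finite Coxeter system and R its family of R-polynomials. If u ≤ v in Bruhat order, then the Bruhat sizes satisfy |u| ≤ |v|, i.e. R_{e,u}(2) ≤ R_{e,v}(2). -/

import Mathlib

open Polynomial

/-- A Bruhat edge `u → v`: `v = u * t` for some reflection `t`, and `ℓ(u) < ℓ(v)`. -/
def BruhatEdge {B W : Type*} [Group W] {M : CoxeterMatrix B}
    (cs : CoxeterSystem M W) (u v : W) : Prop :=
  ∃ t : W, cs.IsReflection t ∧ v = u * t ∧ cs.length u < cs.length v

/-- Bruhat order: the reflexive-transitive closure of the Bruhat edge relation. -/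
def BruhatLE {B W : Type*} [Group W] {M : CoxeterMatrix B}
    (cs : CoxeterSystem M W) : W → W → Prop :=
  Relation.ReflTransGen (BruhatEdge cs)

/-- The defining properties of the family of `R`-polynomials. -/
def IsRFamily {B W : Type*} [Group W] {M : CoxeterMatrix B}
    (cs : CoxeterSystem M W) (R : W → W → Polynomial ℤ) : Prop :=
  (∀ u w, ¬ BruhatLE cs u w → R u w = 0) ∧
  (∀ w, R w w = 1) ∧
  (∀ u w, ∀ i : B, cs.length (w * cs.simple i) < cs.length w →
    (cs.length (u * cs.simple i) < cs.length u →
      R u w = R (u * cs.simple i) (w * cs.simple i)) ∧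
    (cs.length u < cs.length (u * cs.simple i) →
      R u w = (X - 1) * R u (w * cs.simple i)
        + X * R (u * cs.simple i) (w * cs.simple i)))

/-- The defining properties of the family of `R̃`-polynomials. -/
def IsRTildeFamily {B W : Type*} [Group W] {M : CoxeterMatrix B}
    (cs : CoxeterSystem M W) (Rt : W → W → Polynomial ℕ) : Prop :=
  (∀ u w, ¬ BruhatLE cs u w → Rt u w = 0) ∧
  (∀ w, Rt w w = 1) ∧
  (∀ u w, ∀ i : B, cs.length (w * cs.simple i) < cs.length w →
    (cs.length (u * cs.simple i) < cs.length u →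
      Rt u w = Rt (u * cs.simple i) (w * cs.simple i)) ∧
    (cs.length u < cs.length (u * cs.simple i) →
      Rt u w = X * Rt u (w * cs.simple i)
        + Rt (u * cs.simple i) (w * cs.simple i)))

/-- Dihedral polynomials. -/
noncomputable def dPoly : ℕ → Polynomial ℤ
  | 0 => 1
  | 1 => X
  | 2 => X ^ 2
  | (n + 3) => X * dPoly (n + 2) + (X + 1) * dPoly (n + 1)

/-- The degree of a vertex `x` in the Bruhat graph on the vertex set `V`:
the total number of incident edges (incoming plus outgoing). -/
noncomputable def degIn {B W : Type*} [Group W] {M : CoxeterMatrix B}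
    (cs : CoxeterSystem M W) (V : Set W) (x : W) : ℕ :=
  Nat.card {y : W // y ∈ V ∧ (BruhatEdge cs x y ∨ BruhatEdge cs y x)}

/-- The Bruhat graph on the vertex set `V` is regular: all vertices have the same degree. -/
def IsRegularOn {B W : Type*} [Group W] {M : CoxeterMatrix B}
    (cs : CoxeterSystem M W) (V : Set W) : Prop :=
  ∀ x ∈ V, ∀ y ∈ V, degIn cs V x = degIn cs V y

open Polynomial List CoxeterSystem
open scoped Classical

noncomputable section

namespace BSize

variable {B W : Type*} [Group W] {M : CoxeterMatrix B} (cs : CoxeterSystem M W)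

local prefix:100 "s" => cs.simple
local prefix:100 "π" => cs.wordProd
local prefix:100 "ℓ" => cs.length
local prefix:100 "ris" => cs.rightInvSeq

lemma conj_cancel (i : B) (t : W) : s i * (s i * t * s i) * s i = t := by
  rw [mul_assoc (s i) t (s i), cs.simple_mul_simple_cancel_left,
    cs.simple_mul_simple_cancel_right]

/-- the sign-flipping involution attached to a simple reflection. -/
def nu (i : B) : W × ℤˣ → W × ℤˣ :=
  fun p => (s i * p.1 * s i, if p.1 = s i then -p.2 else p.2)

lemma nu_invol (i : B) : Function.Involutive (nu cs i) := by
  intro ⟨t, ε⟩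
  simp only [nu]
  by_cases h : t = s i
  · simp [h, cs.simple_mul_simple_cancel_left, cs.simple_mul_simple_cancel_right]
  · have h2 : s i * t * s i ≠ s i := by
      intro hc
      apply h
      have := congrArg (fun z => s i * z * s i) hc
      simpa [conj_cancel, mul_assoc, cs.simple_mul_simple_cancel_left,
        cs.simple_mul_simple_cancel_right] using this
    simp only [if_neg h, if_neg h2, conj_cancel]

/-- the permutation of `W × ℤˣ` attached to a simple reflection. -/
def fperm (i : B) : Equiv.Perm (W × ℤˣ) := (nu_invol cs i).toPerm

@[simp] lemma fperm_apply (i : B) (p : W × ℤˣ) : fperm cs i p = nu cs i p := rfl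

lemma sj_pow (i j : B) (k : ℕ) :
    s j * (s i * s j) ^ k = ((s i * s j)⁻¹) ^ k * s j := by
  induction k with
  | zero => simp
  | succ k ih =>
    have base : s j * (s i * s j) = (s i * s j)⁻¹ * s j := by
      rw [mul_inv_rev, cs.inv_simple, cs.inv_simple, mul_assoc]
    calc s j * (s i * s j) ^ (k + 1)
        = (s j * (s i * s j) ^ k) * (s i * s j) := by rw [pow_succ, ← mul_assoc]
      _ = ((s i * s j)⁻¹) ^ k * (s j * (s i * s j)) := by rw [ih, mul_assoc]
      _ = ((s i * s j)⁻¹) ^ k * ((s i * s j)⁻¹ * s j) := by rw [base]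
      _ = ((s i * s j)⁻¹) ^ (k + 1) * s j := by rw [pow_succ, mul_assoc]

lemma flip_mul (c : Prop) [Decidable c] (z : ℤˣ) :
    (if c then -z else z) = (if c then (-1 : ℤˣ) else 1) * z := by
  split <;> simp

lemma key_pow (i j : B) (k : ℕ) (t : W) (ε : ℤˣ) :
    ((fperm cs i * fperm cs j) ^ k) (t, ε) =
      ((s i * s j) ^ k * t * ((s i * s j)⁻¹) ^ k,
        (∏ b ∈ Finset.range (2 * k),
          (if t = ((s i * s j)⁻¹) ^ b * s j then (-1 : ℤˣ) else 1)) * ε) := by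
  induction k with
  | zero => simp
  | succ k ih =>
    set x := s i * s j with hx
    have hs : ∀ m : ℕ, s j * x ^ m = (x⁻¹) ^ m * s j := fun m => sj_pow cs i j m
    -- the two flipping conditions
    have condA : ∀ u : W, (x ^ k * u * (x⁻¹) ^ k = s j) ↔ (u = (x⁻¹) ^ (2 * k) * s j) := by
      intro u
      have e2 : (x ^ k)⁻¹ * s j * x ^ k = (x⁻¹) ^ (2 * k) * s j := by
        calc (x ^ k)⁻¹ * s j * x ^ k = (x ^ k)⁻¹ * (s j * x ^ k) := by rw [mul_assoc]
          _ = (x⁻¹) ^ k * ((x⁻¹) ^ k * s j) := by rw [hs k, inv_pow]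
          _ = ((x⁻¹) ^ k * (x⁻¹) ^ k) * s j := by rw [mul_assoc]
          _ = (x⁻¹) ^ (2 * k) * s j := by rw [← pow_add, two_mul]
      constructor
      · intro h
        rw [← e2, ← h]
        rw [inv_pow]
        group
      · intro h
        rw [h, ← e2]
        rw [inv_pow]
        group
    have e3 : s j * s i * s j = x⁻¹ * s j := by
      rw [hx, mul_inv_rev, cs.inv_simple, cs.inv_simple]
    have condB : ∀ u : W, (s j * (x ^ k * u * (x⁻¹) ^ k) * s j = s i) ↔
        (u = (x⁻¹) ^ (2 * k + 1) * s j) := by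
      intro u
      have hiff : (s j * (x ^ k * u * (x⁻¹) ^ k) * s j = s i) ↔
          (x ^ k * u * (x⁻¹) ^ k = s j * s i * s j) := by
        constructor
        · intro h
          rw [← h, conj_cancel]
        · intro h
          rw [h]
          exact conj_cancel cs j (s i)
      have e6 : (x ^ k)⁻¹ * (s j * s i * s j) * x ^ k = (x⁻¹) ^ (2 * k + 1) * s j := by
        calc (x ^ k)⁻¹ * (s j * s i * s j) * x ^ k
            = (x ^ k)⁻¹ * (x⁻¹ * s j) * x ^ k := by rw [e3]
          _ = ((x⁻¹) ^ k * x⁻¹) * (s j * x ^ k) := by rw [inv_pow]; group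
          _ = (x⁻¹) ^ (k + 1) * ((x⁻¹) ^ k * s j) := by rw [hs k, pow_succ]
          _ = ((x⁻¹) ^ (k + 1) * (x⁻¹) ^ k) * s j := by rw [mul_assoc]
          _ = (x⁻¹) ^ (2 * k + 1) * s j := by
              rw [← pow_add, show k + 1 + k = 2 * k + 1 from by omega]
      rw [hiff]
      constructor
      · intro h
        rw [← e6, ← h, inv_pow]
        group
      · intro h
        rw [h, ← e6, inv_pow]
        group
    have hpow : (fperm cs i * fperm cs j) ^ (k + 1) =
        (fperm cs i * fperm cs j) * (fperm cs i * fperm cs j) ^ k := by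
      rw [pow_succ']
    rw [hpow, Equiv.Perm.mul_apply, ih, Equiv.Perm.mul_apply]
    simp only [fperm_apply, nu]
    have w1 : s i * (s j * (x ^ k * t * (x⁻¹) ^ k) * s j) * s i =
        x ^ (k + 1) * t * (x⁻¹) ^ (k + 1) := by
      rw [pow_succ', pow_succ]
      have : (x⁻¹ : W) = s j * s i := by rw [hx, mul_inv_rev, cs.inv_simple, cs.inv_simple]
      rw [this, hx]
      group
    rw [w1]
    have hrange : 2 * (k + 1) = 2 * k + 1 + 1 := by omega
    rw [hrange, Finset.prod_range_succ, Finset.prod_range_succ]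
    congr 1
    simp only [condA t, condB t]
    split_ifs <;> simp [mul_comm, mul_assoc, mul_left_comm]


lemma braid (i j : B) : (fperm cs i * fperm cs j) ^ M i j = 1 := by
  apply Equiv.ext
  rintro ⟨t, ε⟩
  rw [key_pow]
  have h1 : (s i * s j) ^ M i j = 1 := cs.simple_mul_simple_pow i j
  have h2 : ((s i * s j)⁻¹) ^ M i j = 1 := by rw [inv_pow, h1, inv_one]
  have h3 : (∏ b ∈ Finset.range (2 * M i j),
      (if t = ((s i * s j)⁻¹) ^ b * s j then (-1 : ℤˣ) else 1)) = 1 := by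
    rw [two_mul, Finset.prod_range_add]
    have hc : ∀ b ∈ Finset.range (M i j),
        (if t = ((s i * s j)⁻¹) ^ (M i j + b) * s j then (-1 : ℤˣ) else 1) =
        (if t = ((s i * s j)⁻¹) ^ b * s j then (-1 : ℤˣ) else 1) := by
      intro b _
      rw [pow_add, h2, one_mul]
    rw [Finset.prod_congr rfl hc, ← Finset.prod_mul_distrib]
    apply Finset.prod_eq_one
    intro b _
    exact Int.units_mul_self _
  rw [h1, h2, h3]
  simp

/-- The sign homomorphism `W →* Perm (W × ℤˣ)`. -/
def phi : W →* Equiv.Perm (W × ℤˣ) :=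
  cs.lift ⟨fun i => fperm cs i, fun i j => braid cs i j⟩

@[simp] lemma phi_simple (i : B) : phi cs (s i) = fperm cs i := by
  exact cs.lift_apply_simple _ i

/-- The sign of the pair `(w, t)`. -/
def eta (w t : W) : ℤˣ := (phi cs w (t, 1)).2

lemma phi_apply (w : W) : ∀ (t : W) (ε : ℤˣ),
    phi cs w (t, ε) = (w * t * w⁻¹, eta cs w t * ε) := by
  induction w using cs.simple_induction_left with
  | one => intro t ε; simp [eta]
  | mul_simple_left w i ih =>
    intro t ε
    have he : eta cs (s i * w) t =
        (if w * t * w⁻¹ = s i then (-1 : ℤˣ) else 1) * eta cs w t := by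
      unfold eta
      rw [map_mul, Equiv.Perm.mul_apply, ih t 1]
      simp only [phi_simple, fperm_apply, nu]
      split_ifs <;> simp
    rw [map_mul, Equiv.Perm.mul_apply, ih t ε]
    simp only [phi_simple, fperm_apply, nu]
    rw [Prod.ext_iff]
    constructor
    · show s i * (w * t * w⁻¹) * s i = s i * w * t * (s i * w)⁻¹
      rw [mul_inv_rev, cs.inv_simple]
      group
    · show (if w * t * w⁻¹ = s i then -(eta cs w t * ε) else eta cs w t * ε) =
        eta cs (s i * w) t * ε
      rw [he]
      split_ifs <;> simp

lemma eta_mul (u v t : W) : eta cs (u * v) t = eta cs u (v * t * v⁻¹) * eta cs v t := by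
  have h2 : phi cs (u * v) (t, 1) = phi cs u (phi cs v (t, 1)) := by
    rw [map_mul, Equiv.Perm.mul_apply]
  rw [phi_apply cs v t 1, phi_apply cs u (v * t * v⁻¹) (eta cs v t * 1),
    phi_apply cs (u * v) t 1] at h2
  have := congrArg Prod.snd h2
  simpa using this

lemma eta_one (t : W) : eta cs 1 t = 1 := by simp [eta]

lemma eta_simple (i : B) (t : W) : eta cs (s i) t = if t = s i then -1 else 1 := by
  simp only [eta, phi_simple, fperm_apply, nu]

lemma eta_wordProd (ω : List B) (t : W) :
    eta cs (π ω) t = (-1 : ℤˣ) ^ ((ris ω).count t) := by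
  induction ω with
  | nil => simp [eta_one]
  | cons i ω ih =>
    rw [cs.wordProd_cons, eta_mul, ih]
    have hris : ris (i :: ω) = (π ω)⁻¹ * s i * (π ω) :: ris ω := rfl
    rw [hris]
    simp only [List.count_cons, beq_iff_eq]
    have hcond : ((π ω)⁻¹ * s i * (π ω) = t) ↔ (π ω * t * (π ω)⁻¹ = s i) := by
      constructor
      · intro h; rw [← h]; group
      · intro h; rw [← h]; group
    rw [eta_simple]
    by_cases hc : π ω * t * (π ω)⁻¹ = s i
    · rw [if_pos hc, if_pos (hcond.mpr hc), pow_succ]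
      exact mul_comm _ _
    · rw [if_neg hc, if_neg (fun hh => hc (hcond.mp hh))]
      simp


lemma eta_refl_self {t : W} (ht : cs.IsReflection t) : eta cs t t = -1 := by
  obtain ⟨v, i, rfl⟩ := ht
  set t := v * s i * v⁻¹ with hht
  have h1 : t = v * (s i * v⁻¹) := by rw [hht, mul_assoc]
  have m1 : (s i * v⁻¹) * t * (s i * v⁻¹)⁻¹ = s i := by
    rw [hht, mul_inv_rev, inv_inv, cs.inv_simple]
    simp only [mul_assoc, inv_mul_cancel_left]
    rw [cs.simple_mul_simple_cancel_left]
  have m2 : v⁻¹ * t * (v⁻¹)⁻¹ = s i := by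
    rw [hht, inv_inv]
    simp [mul_assoc]
  have e1 : eta cs t t = eta cs v (s i) * eta cs (s i * v⁻¹) t := by
    nth_rewrite 1 [h1]
    rw [eta_mul, m1]
  have e2 : eta cs (s i * v⁻¹) t = eta cs (s i) (s i) * eta cs v⁻¹ t := by
    rw [eta_mul, m2]
  have e3 : eta cs (s i) (s i) = -1 := by rw [eta_simple, if_pos rfl]
  have e4 : eta cs v⁻¹ t * eta cs v (s i) = 1 := by
    have := eta_mul cs v⁻¹ v (s i)
    rw [inv_mul_cancel, eta_one] at this
    rw [← hht] at this
    exact this.symm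
  rw [e1, e2, e3]
  calc eta cs v (s i) * (-1 * eta cs v⁻¹ t)
      = -(eta cs v⁻¹ t * eta cs v (s i)) := by
        rw [neg_one_mul, mul_neg, mul_comm]
    _ = -1 := by rw [e4]

lemma mem_ris_of_eta_neg {w t : W} {ω : List B} (hω : π ω = w)
    (hη : eta cs w t = -1) : t ∈ ris ω := by
  have h := eta_wordProd cs ω t
  rw [hω, hη] at h
  by_contra hmem
  have : (ris ω).count t = 0 := List.count_eq_zero.mpr hmem
  rw [this, pow_zero] at h
  exact absurd h.symm (by decide)

lemma exists_eraseIdx_of_mem {t : W} {ω : List B} (hmem : t ∈ ris ω) :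
    ∃ k, k < ω.length ∧ π ω * t = π (ω.eraseIdx k) := by
  obtain ⟨n, hn, hget⟩ := List.mem_iff_getElem.mp hmem
  rw [cs.length_rightInvSeq] at hn
  refine ⟨n, hn, ?_⟩
  have : (ris ω).getD n 1 = t := by
    rw [List.getD_eq_getElem _ _ (by rwa [cs.length_rightInvSeq])]
    exact hget
  rw [← this]
  exact cs.wordProd_mul_getD_rightInvSeq ω n

lemma descent_of_eta_neg {w t : W} (hη : eta cs w t = -1) : ℓ (w * t) < ℓ w := by
  obtain ⟨ω, hred, hw⟩ := cs.exists_reduced_word' w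
  obtain ⟨k, hk, heq⟩ := exists_eraseIdx_of_mem cs
    (mem_ris_of_eta_neg cs hw.symm hη)
  rw [hw, heq]
  calc ℓ (π (ω.eraseIdx k)) ≤ (ω.eraseIdx k).length := cs.length_wordProd_le _
    _ < ω.length := by
        have := List.length_eraseIdx_add_one hk
        omega
    _ = ℓ (π ω) := hred.symm

lemma eta_neg_of_descent {w t : W} (ht : cs.IsReflection t)
    (hlt : ℓ (w * t) < ℓ w) : eta cs w t = -1 := by
  rcases Int.units_eq_one_or (eta cs w t) with h | h
  · exfalso
    have e1 : eta cs (w * t) t = -1 := by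
      rw [eta_mul]
      have : t * t * t⁻¹ = t := by rw [ht.mul_self, one_mul, ht.inv]
      rw [this, h, one_mul]
      exact eta_refl_self cs ht
    have := descent_of_eta_neg cs e1
    rw [mul_assoc, ht.mul_self, mul_one] at this
    omega
  · exact h

/-- Strong exchange property, for arbitrary words. -/
lemma strongExchange {w t : W} {ω : List B} (ht : cs.IsReflection t)
    (hlt : ℓ (w * t) < ℓ w) (hω : π ω = w) :
    ∃ k, k < ω.length ∧ w * t = π (ω.eraseIdx k) := by
  obtain ⟨k, hk, heq⟩ := exists_eraseIdx_of_mem cs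
    (mem_ris_of_eta_neg cs hω (eta_neg_of_descent cs ht hlt))
  exact ⟨k, hk, by rw [← hω, heq]⟩


/-! ### Bruhat order basics -/

lemma edge_mul_refl {u t : W} (ht : cs.IsReflection t) (h : ℓ u < ℓ (u * t)) :
    BruhatEdge cs u (u * t) := ⟨t, ht, rfl, h⟩

lemma edge_length_lt {u v : W} (h : BruhatEdge cs u v) : ℓ u < ℓ v := by
  obtain ⟨t, _, _, hl⟩ := h
  exact hl

lemma le_length_le {u w : W} (h : BruhatLE cs u w) : ℓ u ≤ ℓ w := by
  induction h with
  | refl => exact le_rfl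
  | tail _ he ih => exact le_trans ih (le_of_lt (edge_length_lt cs he))

lemma eq_one_of_le_one {u : W} (h : BruhatLE cs u 1) : u = 1 := by
  have := le_length_le cs h
  rw [cs.length_one, Nat.le_zero, cs.length_eq_zero_iff] at this
  exact this

lemma le_of_edge {u v : W} (h : BruhatEdge cs u v) : BruhatLE cs u v :=
  Relation.ReflTransGen.single h

lemma desc_le {w : W} {j : B} (hj : ℓ (w * s j) < ℓ w) : BruhatLE cs (w * s j) w := by
  have h2 : (w * s j) * s j = w := by rw [mul_assoc, cs.simple_mul_simple_self, mul_one]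
  have he : BruhatEdge cs (w * s j) ((w * s j) * s j) :=
    edge_mul_refl cs (cs.isReflection_simple j) (by rw [h2]; exact hj)
  rw [h2] at he
  exact le_of_edge cs he

lemma asc_le {w : W} {j : B} (hj : ℓ w < ℓ (w * s j)) : BruhatLE cs w (w * s j) :=
  le_of_edge cs (edge_mul_refl cs (cs.isReflection_simple j) hj)

lemma edge_parity {u v : W} (h : BruhatEdge cs u v) : ℓ u % 2 ≠ ℓ v % 2 := by
  obtain ⟨t, ht, rfl, _⟩ := h
  rw [cs.length_mul_mod_two]
  obtain ⟨m, hm⟩ := ht.odd_length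
  omega

/-- The key diamond lemma. -/
lemma tit {w : W} {i j : B} (hi : ℓ (s i * w) < ℓ w) (hj : ℓ (w * s j) < ℓ w)
    (hz : ℓ (s i * w * s j) = ℓ w) : s i * w = w * s j := by
  obtain ⟨μ, hμred, hμ⟩ := cs.exists_reduced_word' (s i * w)
  have hμlen : μ.length = ℓ (s i * w) := by rw [hμ]; exact hμred.symm
  have hω : π (i :: μ) = w := by
    rw [cs.wordProd_cons, ← hμ, ← mul_assoc, cs.simple_mul_simple_self, one_mul]
  obtain ⟨k, hk, hek⟩ := strongExchange cs (cs.isReflection_simple j) hj hω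
  match k with
  | 0 =>
    rw [List.eraseIdx_cons_zero, ← hμ] at hek
    exact hek.symm
  | (k' + 1) =>
    exfalso
    rw [List.eraseIdx_cons_succ, cs.wordProd_cons] at hek
    have h2 : ℓ (s i * (w * s j)) ≤ (μ.eraseIdx k').length := by
      have : s i * (w * s j) = π (μ.eraseIdx k') := by
        rw [hek, ← mul_assoc, cs.simple_mul_simple_self, one_mul]
      rw [this]
      exact cs.length_wordProd_le _
    have hk' : k' < μ.length := by
      simp only [List.length_cons] at hk
      omega
    have h3 := List.length_eraseIdx_add_one hk'
    have hii : ℓ (s i * w) + 1 = ℓ w := by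
      rcases cs.length_simple_mul w i with h | h
      · omega
      · omega
    rw [← mul_assoc] at h2
    omega

/-- Lifting property, ascent case: `u ≤ w`, `ws_j < w`, `u < us_j` implies `u ≤ ws_j`. -/
lemma lift_asc (n : ℕ) : ∀ u w : W, ℓ w ≤ n → BruhatLE cs u w → ∀ j : B,
    ℓ (w * s j) < ℓ w → ℓ u < ℓ (u * s j) → BruhatLE cs u (w * s j) := by
  induction n with
  | zero =>
    intro u w hw _ j hj _
    omega
  | succ n IH =>
    intro u w hw hle j hj hu
    have hwj : ℓ (w * s j) + 1 = ℓ w := by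
      rcases cs.length_mul_simple w j with h | h <;> omega
    rcases Relation.ReflTransGen.cases_tail hle with heq | ⟨v, huv, hedge⟩
    · exfalso; subst heq; omega
    obtain ⟨t, ht, hvt, hlvw⟩ := hedge
    by_cases hv : v = w * s j
    · rw [← hv]; exact huv
    · have hwt : w * t = v := by rw [hvt, mul_assoc, ht.mul_self, mul_one]
      have hpar : ℓ v % 2 ≠ ℓ w % 2 := by
        have := edge_parity cs ⟨t, ht, hvt, hlvw⟩
        exact this
      rcases cs.length_mul_simple v j with hvj | hvj
      · -- ascent of v at j
        by_cases hcmp : ℓ (v * s j) < ℓ (w * s j)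
        · -- u ≤ v ≤ v s_j ≤ w s_j
          have e1 : BruhatLE cs v (v * s j) := asc_le cs (by omega)
          have e2 : BruhatEdge cs (v * s j) (w * s j) := by
            have hprod : w * s j = (v * s j) * (s j * t * s j) := by
              rw [← hwt]
              simp only [mul_assoc]
              rw [cs.simple_mul_simple_cancel_left, ← mul_assoc t t (s j),
                ht.mul_self, one_mul]
            rw [hprod]
            have hrefl : cs.IsReflection (s j * t * s j) := by
              have := ht.conj (s j)
              rwa [cs.inv_simple] at this
            exact edge_mul_refl cs hrefl (by rw [← hprod]; omega)
          exact Relation.ReflTransGen.tail (Relation.ReflTransGen.trans huv e1) e2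
        · exfalso
          -- forced: ℓ (v s j) = ℓ w, get contradiction via strong exchange
          have hvj2 : ℓ (v * s j) = ℓ w := by
            have : ℓ (v * s j) ≠ ℓ (w * s j) := by
              have h1 : ℓ (v * s j) % 2 ≠ ℓ (w * s j) % 2 := by omega
              omega
            omega
          obtain ⟨μ, hμred, hμ⟩ := cs.exists_reduced_word' (w * s j)
          have hμlen : μ.length = ℓ (w * s j) := by
            rw [← hμred]; rw [← hμ]
          have hω : π (μ ++ [j]) = w := by
            rw [cs.wordProd_append, cs.wordProd_singleton, ← hμ, mul_assoc,
              cs.simple_mul_simple_self, mul_one]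
          obtain ⟨k, hk, hek⟩ := strongExchange cs ht (by rw [hwt]; exact hlvw) hω
          rw [List.length_append, List.length_singleton] at hk
          rcases lt_or_ge k μ.length with hklt | hkge
          · rw [List.eraseIdx_append_of_lt_length hklt, cs.wordProd_append,
              cs.wordProd_singleton] at hek
            have : v * s j = π (μ.eraseIdx k) := by
              rw [← hwt, hek, mul_assoc, cs.simple_mul_simple_self, mul_one]
            have h4 : ℓ (v * s j) ≤ (μ.eraseIdx k).length := by
              rw [this]; exact cs.length_wordProd_le _
            have h5 := List.length_eraseIdx_add_one hklt
            omega
          · have hkeq : k = μ.length := by omega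
            rw [hkeq, List.eraseIdx_append_of_length_le (le_refl _)] at hek
            simp only [Nat.sub_self, List.eraseIdx_cons_zero, List.append_nil] at hek
            rw [← hμ] at hek
            exact hv (by rw [← hwt, hek])
      · -- descent of v at j : recurse
        have h1 : BruhatLE cs u (v * s j) := by
          refine IH u v (by omega) huv j (by omega) hu
        have e2 : BruhatEdge cs (v * s j) (w * s j) := by
          have hprod : w * s j = (v * s j) * (s j * t * s j) := by
            rw [← hwt]
            simp only [mul_assoc]
            rw [cs.simple_mul_simple_cancel_left, ← mul_assoc t t (s j),
              ht.mul_self, one_mul]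
          rw [hprod]
          have hrefl : cs.IsReflection (s j * t * s j) := by
            have := ht.conj (s j)
            rwa [cs.inv_simple] at this
          exact edge_mul_refl cs hrefl (by rw [← hprod]; omega)
        exact Relation.ReflTransGen.tail h1 e2

/-- Lifting property, descent case. -/
lemma lift_desc (n : ℕ) : ∀ u w : W, ℓ w ≤ n → BruhatLE cs u w → ∀ j : B,
    ℓ (w * s j) < ℓ w → ℓ (u * s j) < ℓ u → BruhatLE cs (u * s j) (w * s j) := by
  induction n with
  | zero =>
    intro u w hw _ j hj _
    omega
  | succ n IH =>
    intro u w hw hle j hj hu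
    have hwj : ℓ (w * s j) + 1 = ℓ w := by
      rcases cs.length_mul_simple w j with h | h <;> omega
    rcases Relation.ReflTransGen.cases_tail hle with heq | ⟨v, huv, hedge⟩
    · subst heq; exact Relation.ReflTransGen.refl
    obtain ⟨t, ht, hvt, hlvw⟩ := hedge
    by_cases hv : v = w * s j
    · have h1 : BruhatLE cs (u * s j) u := desc_le cs hu
      exact Relation.ReflTransGen.trans h1 (hv ▸ huv)
    · have hwt : w * t = v := by rw [hvt, mul_assoc, ht.mul_self, mul_one]
      have hpar : ℓ v % 2 ≠ ℓ w % 2 := edge_parity cs ⟨t, ht, hvt, hlvw⟩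
      rcases cs.length_mul_simple v j with hvj | hvj
      · -- ascent of v at j
        by_cases hcmp : ℓ (v * s j) < ℓ (w * s j)
        · have e1 : BruhatLE cs v (v * s j) := asc_le cs (by omega)
          have hprod : w * s j = (v * s j) * (s j * t * s j) := by
            rw [← hwt]
            simp only [mul_assoc]
            rw [cs.simple_mul_simple_cancel_left, ← mul_assoc t t (s j),
              ht.mul_self, one_mul]
          have hrefl : cs.IsReflection (s j * t * s j) := by
            have := ht.conj (s j)
            rwa [cs.inv_simple] at this
          have e2 : BruhatEdge cs (v * s j) (w * s j) := by
            rw [hprod]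
            exact edge_mul_refl cs hrefl (by rw [← hprod]; omega)
          have h1 : BruhatLE cs (u * s j) u := desc_le cs hu
          exact Relation.ReflTransGen.tail
            (Relation.ReflTransGen.trans h1 (Relation.ReflTransGen.trans huv e1)) e2
        · exfalso
          have hvj2 : ℓ (v * s j) = ℓ w := by omega
          obtain ⟨μ, hμred, hμ⟩ := cs.exists_reduced_word' (w * s j)
          have hμlen : μ.length = ℓ (w * s j) := by
            rw [hμ]; exact hμred.symm
          have hω : π (μ ++ [j]) = w := by
            rw [cs.wordProd_append, cs.wordProd_singleton, ← hμ, mul_assoc,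
              cs.simple_mul_simple_self, mul_one]
          obtain ⟨k, hk, hek⟩ := strongExchange cs ht (by rw [hwt]; exact hlvw) hω
          rw [List.length_append, List.length_singleton] at hk
          rcases lt_or_ge k μ.length with hklt | hkge
          · rw [List.eraseIdx_append_of_lt_length hklt, cs.wordProd_append,
              cs.wordProd_singleton] at hek
            have : v * s j = π (μ.eraseIdx k) := by
              rw [← hwt, hek, mul_assoc, cs.simple_mul_simple_self, mul_one]
            have h4 : ℓ (v * s j) ≤ (μ.eraseIdx k).length := by
              rw [this]; exact cs.length_wordProd_le _
            have h5 := List.length_eraseIdx_add_one hklt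
            omega
          · have hkeq : k = μ.length := by omega
            rw [hkeq, List.eraseIdx_append_of_length_le (le_refl _)] at hek
            simp only [Nat.sub_self, List.eraseIdx_cons_zero, List.append_nil] at hek
            rw [← hμ] at hek
            exact hv (by rw [← hwt, hek])
      · -- descent of v at j : recurse
        have h1 : BruhatLE cs (u * s j) (v * s j) := IH u v (by omega) huv j (by omega) hu
        have hprod : w * s j = (v * s j) * (s j * t * s j) := by
          rw [← hwt]
          simp only [mul_assoc]
          rw [cs.simple_mul_simple_cancel_left, ← mul_assoc t t (s j),
            ht.mul_self, one_mul]
        have hrefl : cs.IsReflection (s j * t * s j) := by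
          have := ht.conj (s j)
          rwa [cs.inv_simple] at this
        have e2 : BruhatEdge cs (v * s j) (w * s j) := by
          rw [hprod]
          exact edge_mul_refl cs hrefl (by rw [← hprod]; omega)
        exact Relation.ReflTransGen.tail h1 e2

lemma lift_asc' {u w : W} {j : B} (hle : BruhatLE cs u w) (hj : ℓ (w * s j) < ℓ w)
    (hu : ℓ u < ℓ (u * s j)) : BruhatLE cs u (w * s j) :=
  lift_asc cs (ℓ w) u w le_rfl hle j hj hu

lemma lift_desc' {u w : W} {j : B} (hle : BruhatLE cs u w) (hj : ℓ (w * s j) < ℓ w)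
    (hu : ℓ (u * s j) < ℓ u) : BruhatLE cs (u * s j) (w * s j) :=
  lift_desc cs (ℓ w) u w le_rfl hle j hj hu


lemma simple_ne_one (i : B) : s i ≠ 1 := by
  intro h
  have := cs.length_simple i
  rw [h, cs.length_one] at this
  omega

lemma le_simple {u : W} {i : B} (h : BruhatLE cs u (s i)) : u = 1 ∨ u = s i := by
  rcases Relation.ReflTransGen.cases_tail h with heq | ⟨v, huv, hedge⟩
  · right; exact heq.symm
  · left
    have hv : ℓ v < ℓ (s i) := edge_length_lt cs hedge
    rw [cs.length_simple] at hv
    have hv1 : v = 1 := by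
      rw [← cs.length_eq_zero_iff]; omega
    subst hv1
    exact eq_one_of_le_one cs huv

/-! ### operators -/

/-- Right Hecke-type operator at q = 2. -/
def Rho (j : B) (f : W → ℤ) : W → ℤ :=
  fun u => if ℓ (u * s j) < ℓ u then f (u * s j) + f u else 2 * f (u * s j)

/-- Left Hecke-type operator at q = 2. -/
def Lam (i : B) (f : W → ℤ) : W → ℤ :=
  fun u => if ℓ (s i * u) < ℓ u then f (s i * u) + f u else 2 * f (s i * u)

lemma Rho_sub (j : B) (f g : W → ℤ) (u : W) :
    Rho cs j (fun x => f x - g x) u = Rho cs j f u - Rho cs j g u := by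
  unfold Rho; split_ifs <;> ring

lemma Lam_sub (i : B) (f g : W → ℤ) (u : W) :
    Lam cs i (fun x => f x - g x) u = Lam cs i f u - Lam cs i g u := by
  unfold Lam; split_ifs <;> ring

lemma lam_rho_comm (i j : B) (f : W → ℤ) (u : W) :
    Lam cs i (Rho cs j f) u = Rho cs j (Lam cs i f) u := by
  have assoc1 : s i * (u * s j) = s i * u * s j := by rw [mul_assoc]
  rcases cs.length_simple_mul u i with hL | hL
  · rcases cs.length_mul_simple u j with hR | hR
    · rcases cs.length_mul_simple (s i * u) j with hZ | hZ
      · have hZ' : ℓ (s i * (u * s j)) = ℓ (u * s j) + 1 := by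
          rw [assoc1]; omega
        unfold Lam Rho; beta_reduce; rw [assoc1]
        split_ifs <;> first | (exfalso; omega) | ring
      · have heq : s i * u = u * s j := by
          have h1 : ℓ (s i * (s i * u)) < ℓ (s i * u) := by
            rw [cs.simple_mul_simple_cancel_left]; omega
          have h2 : ℓ ((s i * u) * s j) < ℓ (s i * u) := by omega
          have h3 : ℓ (s i * (s i * u) * s j) = ℓ (s i * u) := by
            rw [cs.simple_mul_simple_cancel_left]; omega
          have h4 := tit cs h1 h2 h3
          rw [cs.simple_mul_simple_cancel_left] at h4
          calc s i * u = (s i * u) * s j * s j := by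
                rw [mul_assoc, cs.simple_mul_simple_self, mul_one]
            _ = u * s j := by rw [← h4]
        have hZ' : ℓ (s i * (u * s j)) < ℓ (u * s j) := by
          rw [assoc1]; omega
        unfold Lam Rho; beta_reduce; rw [assoc1]
        split_ifs <;> first | (exfalso; omega) | (rw [show f (s i * u) = f (u * s j) from by rw [heq]]; try ring) | ring
    · have hZ : ℓ (s i * u * s j) = ℓ u := by
        have haux := cs.length_simple_mul (u * s j) i
        rw [assoc1] at haux
        rcases haux with h1 | h1 <;>
          rcases cs.length_mul_simple (s i * u) j with h2 | h2 <;> omega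
      have hZ' : ℓ (s i * (u * s j)) = ℓ u := by rw [assoc1]; omega
      unfold Lam Rho; beta_reduce; rw [assoc1]
      split_ifs <;> first | (exfalso; omega) | ring
  · rcases cs.length_mul_simple u j with hR | hR
    · have hZ : ℓ (s i * u * s j) = ℓ u := by
        have haux := cs.length_simple_mul (u * s j) i
        rw [assoc1] at haux
        rcases haux with h1 | h1 <;>
          rcases cs.length_mul_simple (s i * u) j with h2 | h2 <;> omega
      have hZ' : ℓ (s i * (u * s j)) = ℓ u := by rw [assoc1]; omega
      unfold Lam Rho; beta_reduce; rw [assoc1]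
      split_ifs <;> first | (exfalso; omega) | ring
    · rcases cs.length_mul_simple (s i * u) j with hZ | hZ
      · have heq : s i * u = u * s j :=
          tit cs (by omega) (by omega) (by omega)
        have hZ' : ℓ (s i * (u * s j)) = ℓ u := by rw [assoc1]; omega
        unfold Lam Rho; beta_reduce; rw [assoc1]
        split_ifs <;> first | (exfalso; omega) | (rw [show f (s i * u) = f (u * s j) from by rw [heq]]; try ring) | ring
      · have hZ' : ℓ (s i * (u * s j)) + 1 = ℓ (u * s j) := by rw [assoc1]; omega
        unfold Lam Rho; beta_reduce; rw [assoc1]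
        split_ifs <;> first | (exfalso; omega) | ring

section RFam

variable (R : W → W → Polynomial ℤ)

/-- `R`-polynomial evaluated at 2. -/
def rr (u w : W) : ℤ := (R u w).eval 2

/-- The signed family of functions. -/
def Psi (w : W) : W → ℤ := fun u => (-1 : ℤ) ^ (ℓ u) * rr R u w

/-- The defining properties of the family of `R`-polynomials. -/
def IsRFamily' : Prop :=
  (∀ u w, ¬ BruhatLE cs u w → R u w = 0) ∧
  (∀ w, R w w = 1) ∧
  (∀ u w, ∀ i : B, cs.length (w * cs.simple i) < cs.length w →
    (cs.length (u * cs.simple i) < cs.length u →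
      R u w = R (u * cs.simple i) (w * cs.simple i)) ∧
    (cs.length u < cs.length (u * cs.simple i) →
      R u w = (X - 1) * R u (w * cs.simple i)
        + X * R (u * cs.simple i) (w * cs.simple i)))

variable {R} {cs}

lemma r_zero (hR : IsRFamily' cs R) {u w : W} (h : ¬ BruhatLE cs u w) : rr R u w = 0 := by
  unfold rr; rw [hR.1 u w h]; simp

lemma r_diag (hR : IsRFamily' cs R) (w : W) : rr R w w = 1 := by
  unfold rr; rw [hR.2.1 w]; simp

lemma r_desc (hR : IsRFamily' cs R) {u w : W} {i : B} (hw : ℓ (w * s i) < ℓ w) (hu : ℓ (u * s i) < ℓ u) :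
    rr R u w = rr R (u * s i) (w * s i) := by
  unfold rr; rw [(hR.2.2 u w i hw).1 hu]

lemma r_asc (hR : IsRFamily' cs R) {u w : W} {i : B} (hw : ℓ (w * s i) < ℓ w) (hu : ℓ u < ℓ (u * s i)) :
    rr R u w = rr R u (w * s i) + 2 * rr R (u * s i) (w * s i) := by
  unfold rr
  rw [(hR.2.2 u w i hw).2 hu]
  simp [eval_mul, eval_add, eval_sub]
  try ring

lemma r_nonneg (hR : IsRFamily' cs R) (n : ℕ) : ∀ w : W, ℓ w ≤ n → ∀ u : W, 0 ≤ rr R u w := by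
  induction n with
  | zero =>
    intro w hw u
    have hw1 : w = 1 := by rw [← cs.length_eq_zero_iff]; omega
    subst hw1
    by_cases h : u = 1
    · subst h; rw [r_diag hR]; norm_num
    · rw [r_zero hR (fun hc => h (eq_one_of_le_one cs hc))]
  | succ n IH =>
    intro w hw u
    by_cases hle : BruhatLE cs u w
    · by_cases heq : u = w
      · subst heq; rw [r_diag hR]; norm_num
      · have hw1 : w ≠ 1 := by
          intro hc; subst hc; exact heq (eq_one_of_le_one cs hle)
        obtain ⟨j, hj⟩ := cs.exists_rightDescent_of_ne_one hw1
        have hj' : ℓ (w * s j) < ℓ w := hj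
        rcases cs.length_mul_simple u j with hu | hu
        · rw [r_asc hR hj' (by omega)]
          have h1 := IH (w * s j) (by omega) u
          have h2 := IH (w * s j) (by omega) (u * s j)
          omega
        · rw [r_desc hR hj' (by omega)]
          exact IH (w * s j) (by omega) (u * s j)
    · rw [r_zero hR hle]


lemma r_one (hR : IsRFamily' cs R) (u : W) :
    rr R u 1 = if u = 1 then 1 else 0 := by
  by_cases h : u = 1
  · subst h; rw [if_pos rfl]; exact r_diag hR 1
  · rw [if_neg h]
    exact r_zero hR (fun hc => h (eq_one_of_le_one cs hc))

lemma r_simple (hR : IsRFamily' cs R) (i : B) (u : W) :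
    rr R u (s i) = if u = 1 then 1 else if u = s i then 1 else 0 := by
  have hd : ℓ ((s i) * s i) < ℓ (s i) := by
    rw [cs.simple_mul_simple_self, cs.length_one, cs.length_simple]; omega
  by_cases h1 : u = 1
  · subst h1
    rw [if_pos rfl]
    have ha : ℓ (1 : W) < ℓ ((1 : W) * s i) := by
      rw [one_mul, cs.length_one, cs.length_simple]; omega
    rw [r_asc hR hd ha, cs.simple_mul_simple_self, one_mul]
    rw [r_diag hR, r_one hR]
    rw [if_neg (simple_ne_one cs i)]
    ring
  · by_cases h2 : u = s i
    · subst h2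
      rw [if_neg h1, if_pos rfl]
      exact r_diag hR (s i)
    · rw [if_neg h1, if_neg h2]
      refine r_zero hR (fun hc => ?_)
      rcases le_simple cs hc with h | h
      · exact h1 h
      · exact h2 h

lemma psi_step_right (hR : IsRFamily' cs R) {w : W} {j : B}
    (hj : ℓ (w * s j) < ℓ w) (u : W) :
    Psi cs R w u = Psi cs R (w * s j) u - Rho cs j (Psi cs R (w * s j)) u := by
  unfold Psi Rho
  beta_reduce
  rcases cs.length_mul_simple u j with hu | hu
  · rw [if_neg (by omega), r_asc hR hj (by omega), hu, pow_succ]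
    ring
  · rw [if_pos (by omega), r_desc hR hj (by omega),
      show ℓ u = ℓ (u * s j) + 1 from by omega, pow_succ]
    ring

lemma psi_key (hR : IsRFamily' cs R) (i : B) : ∀ θ : List B, cs.IsReduced (i :: θ) →
    ∀ u, Psi cs R (π (i :: θ)) u = Psi cs R (π θ) u - Lam cs i (Psi cs R (π θ)) u := by
  intro θ
  induction θ using List.reverseRecOn with
  | nil =>
    intro _ u
    rw [cs.wordProd_singleton, cs.wordProd_nil]
    unfold Psi Lam
    beta_reduce
    rw [r_one hR, r_one hR, r_simple hR]
    by_cases h1 : u = 1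
    · subst h1
      have hl : ¬ ℓ ((s i) * 1) < ℓ (1 : W) := by
        rw [mul_one, cs.length_one]; omega
      rw [if_pos rfl, if_pos rfl, if_neg hl]
      simp only [mul_one]
      rw [if_neg (simple_ne_one cs i), cs.length_one]
      ring
    · by_cases h2 : u = s i
      · subst h2
        have hl : ℓ ((s i) * s i) < ℓ (s i) := by
          rw [cs.simple_mul_simple_self, cs.length_one, cs.length_simple]; omega
        rw [if_neg h1, if_pos rfl, if_pos hl, cs.simple_mul_simple_self,
          if_pos rfl, if_neg h1, cs.length_simple, cs.length_one]
        ring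
      · have h3 : ¬ (s i * u = 1) := by
          intro hc
          apply h2
          calc u = s i * (s i * u) := by rw [cs.simple_mul_simple_cancel_left]
            _ = s i := by rw [hc, mul_one]
        rw [if_neg h1, if_neg h2, if_neg h1, if_neg h3]
        split_ifs <;> ring
  | append_singleton θ' j IH =>
    intro hred u
    have hassoc : (i :: (θ' ++ [j])) = (i :: θ') ++ [j] := by simp
    have red1 : cs.IsReduced (i :: θ') := by
      have h := hred.take (i :: θ').length
      rwa [hassoc, List.take_left] at h
    have red2 : cs.IsReduced (θ' ++ [j]) := by
      have h := hred.drop 1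
      simpa using h
    have red3 : cs.IsReduced θ' := by
      have h := red2.take θ'.length
      rwa [List.take_left] at h
    -- descent facts
    have hw1 : π (i :: (θ' ++ [j])) = π (i :: θ') * s j := by
      rw [hassoc, cs.wordProd_append, cs.wordProd_singleton]
    have hw2 : π (θ' ++ [j]) = π θ' * s j := by
      rw [cs.wordProd_append, cs.wordProd_singleton]
    have hlen1 : ℓ (π (i :: (θ' ++ [j]))) = θ'.length + 2 := by
      rw [hred]; simp
    have hlen2 : ℓ (π (i :: θ')) = θ'.length + 1 := by
      rw [red1]; simp
    have hlen3 : ℓ (π (θ' ++ [j])) = θ'.length + 1 := by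
      rw [red2]; simp
    have hlen4 : ℓ (π θ') = θ'.length := red3
    have hlen1' : ℓ (π (i :: θ') * s j) = θ'.length + 2 := by
      rw [← hw1]; exact hlen1
    have hlen3' : ℓ (π θ' * s j) = θ'.length + 1 := by
      rw [← hw2]; exact hlen3
    have hd1 : ℓ (π (i :: (θ' ++ [j])) * s j) < ℓ (π (i :: (θ' ++ [j]))) := by
      rw [hw1, mul_assoc, cs.simple_mul_simple_self, mul_one]
      omega
    have hd2 : ℓ (π (θ' ++ [j]) * s j) < ℓ (π (θ' ++ [j])) := by
      rw [hw2, mul_assoc, cs.simple_mul_simple_self, mul_one]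
      omega
    have hc1 : π (i :: (θ' ++ [j])) * s j = π (i :: θ') := by
      rw [hw1, mul_assoc, cs.simple_mul_simple_self, mul_one]
    have hc2 : π (θ' ++ [j]) * s j = π θ' := by
      rw [hw2, mul_assoc, cs.simple_mul_simple_self, mul_one]
    -- the function-level identities
    have hG : Psi cs R (π (i :: θ')) = fun x =>
        Psi cs R (π θ') x - Lam cs i (Psi cs R (π θ')) x := funext (IH red1)
    have hE : Psi cs R (π (θ' ++ [j])) = fun x =>
        Psi cs R (π θ') x - Rho cs j (Psi cs R (π θ')) x := by
      funext x
      have := psi_step_right hR hd2 x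
      rwa [hc2] at this
    have step1 := psi_step_right hR hd1 u
    rw [hc1] at step1
    rw [step1, hG, hE]
    beta_reduce
    have hcomm := lam_rho_comm cs i j (Psi cs R (π θ')) u
    rw [Rho_sub, Lam_sub, ← hcomm]
    ring

lemma psi_step_left (hR : IsRFamily' cs R) {w : W} {i : B}
    (hi : ℓ (s i * w) < ℓ w) (u : W) :
    Psi cs R w u = Psi cs R (s i * w) u - Lam cs i (Psi cs R (s i * w)) u := by
  obtain ⟨μ, hμred, hμ⟩ := cs.exists_reduced_word' (s i * w)
  have hμlen : μ.length = ℓ (s i * w) := by rw [hμ]; exact hμred.symm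
  have hlw : ℓ (s i * w) + 1 = ℓ w := by
    rcases cs.length_simple_mul w i with h | h <;> omega
  have hπ : π (i :: μ) = w := by
    rw [cs.wordProd_cons, ← hμ, ← mul_assoc, cs.simple_mul_simple_self, one_mul]
  have hredμ : cs.IsReduced (i :: μ) := by
    show ℓ (π (i :: μ)) = (i :: μ).length
    rw [hπ, List.length_cons]
    omega
  have := psi_key hR i μ hredμ u
  rwa [hπ, ← hμ] at this

/-- Left version of the `R`-polynomial recursion (descent case), at `q = 2`. -/
lemma rl_desc (hR : IsRFamily' cs R) {u w : W} {i : B} (hw : ℓ (s i * w) < ℓ w)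
    (hu : ℓ (s i * u) < ℓ u) : rr R u w = rr R (s i * u) (s i * w) := by
  have key := psi_step_left hR hw u
  unfold Psi Lam at key
  beta_reduce at key
  rw [if_pos hu, show ℓ u = ℓ (s i * u) + 1 from by
      rcases cs.length_simple_mul u i with h | h <;> omega, pow_succ] at key
  rcases Nat.even_or_odd (ℓ (s i * u)) with hpar | hpar
  · rw [hpar.neg_one_pow] at key; linarith
  · rw [hpar.neg_one_pow] at key; linarith

/-- Left version of the `R`-polynomial recursion (ascent case), at `q = 2`. -/
lemma rl_asc (hR : IsRFamily' cs R) {u w : W} {i : B} (hw : ℓ (s i * w) < ℓ w)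
    (hu : ℓ u < ℓ (s i * u)) :
    rr R u w = rr R u (s i * w) + 2 * rr R (s i * u) (s i * w) := by
  have key := psi_step_left hR hw u
  unfold Psi Lam at key
  beta_reduce at key
  rw [if_neg (by omega), show ℓ (s i * u) = ℓ u + 1 from by
      rcases cs.length_simple_mul u i with h | h <;> omega, pow_succ] at key
  rcases Nat.even_or_odd (ℓ u) with hpar | hpar
  · rw [hpar.neg_one_pow] at key; linarith
  · rw [hpar.neg_one_pow] at key; linarith


/-- One-step antitonicity in the first argument. -/
lemma step_antitone (hR : IsRFamily' cs R) (n : ℕ) : ∀ v : W, ℓ v ≤ n →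
    ∀ (a : W) (j : B), ℓ (a * s j) < ℓ a → rr R a v ≤ rr R (a * s j) v := by
  induction n with
  | zero =>
    intro v hv a j hj
    have hv1 : v = 1 := by rw [← cs.length_eq_zero_iff]; omega
    subst hv1
    have ha : a ≠ 1 := by
      intro hc
      subst hc
      have := cs.length_mul_simple (1 : W) j
      rw [cs.length_one] at hj
      omega
    rw [r_zero hR (fun hc => ha (eq_one_of_le_one cs hc))]
    exact r_nonneg hR 0 1 (by rw [cs.length_one]) _
  | succ n IH =>
    intro v hv a j hj
    by_cases hv1 : v = 1
    · subst hv1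
      have ha : a ≠ 1 := by
        intro hc
        subst hc
        rw [cs.length_one] at hj
        omega
      rw [r_zero hR (fun hc => ha (eq_one_of_le_one cs hc))]
      exact r_nonneg hR 0 1 (by rw [cs.length_one]) _
    · obtain ⟨i, hi⟩ := cs.exists_leftDescent_of_ne_one hv1
      have hi' : ℓ (s i * v) < ℓ v := hi
      have hvlen : ℓ (s i * v) + 1 = ℓ v := by
        rcases cs.length_simple_mul v i with h | h <;> omega
      have haj : ℓ (a * s j) + 1 = ℓ a := by
        rcases cs.length_mul_simple a j with h | h <;> omega
      have hassoc : s i * (a * s j) = (s i * a) * s j := by rw [mul_assoc]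
      rcases cs.length_simple_mul a i with hA | hA
      · -- i-ascent of a
        rcases cs.length_simple_mul (a * s j) i with hB | hB
        · -- i-ascent of b = a s j : case (4)
          have h1 := rl_asc hR hi' (show ℓ a < ℓ (s i * a) by omega)
          have h2 := rl_asc hR hi' (show ℓ (a * s j) < ℓ (s i * (a * s j)) by omega)
          rw [h1, h2]
          have e1 : rr R a (s i * v) ≤ rr R (a * s j) (s i * v) :=
            IH (s i * v) (by omega) a j (by omega)
          have e2 : rr R (s i * a) (s i * v) ≤ rr R (s i * (a * s j)) (s i * v) := by
            have := IH (s i * v) (by omega) (s i * a) j (by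
              rw [← hassoc]
              omega)
            rwa [← hassoc] at this
          linarith
        · -- i-descent of b : impossible, case (3)
          exfalso
          rw [hassoc] at hB
          rcases cs.length_mul_simple (s i * a) j with h | h <;> omega
      · -- i-descent of a
        rcases cs.length_simple_mul (a * s j) i with hB | hB
        · -- i-ascent of b : case (2), degenerate
          have heq : s i * a = a * s j := by
            apply tit cs (show ℓ (s i * a) < ℓ a by omega) (show ℓ (a * s j) < ℓ a by omega)
            rw [← hassoc]
            omega
          have h1 := rl_desc hR hi' (show ℓ (s i * a) < ℓ a by omega)
          have h2 := rl_asc hR hi' (show ℓ (a * s j) < ℓ (s i * (a * s j)) by omega)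
          rw [h1, h2, heq]
          have := r_nonneg hR (ℓ (s i * v)) (s i * v) le_rfl (s i * (a * s j))
          linarith
        · -- i-descent of b : case (1)
          have h1 := rl_desc hR hi' (show ℓ (s i * a) < ℓ a by omega)
          have h2 := rl_desc hR hi' (show ℓ (s i * (a * s j)) < ℓ (a * s j) by omega)
          rw [h1, h2]
          have := IH (s i * v) (by omega) (s i * a) j (by
            rw [← hassoc]
            omega)
          rwa [← hassoc] at this

/-- Monotonicity of Bruhat size along Bruhat order (main lemma). -/
lemma mono (hR : IsRFamily' cs R) (n : ℕ) : ∀ w : W, ℓ w ≤ n → ∀ a u : W,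
    BruhatLE cs u w → rr R a u ≤ rr R a w := by
  induction n with
  | zero =>
    intro w hw a u hle
    have hw1 : w = 1 := by rw [← cs.length_eq_zero_iff]; omega
    subst hw1
    rw [eq_one_of_le_one cs hle]
  | succ n IH =>
    intro w hw a u hle
    by_cases heq : u = w
    · subst heq; exact le_rfl
    · have hw1 : w ≠ 1 := fun hc => heq (by rw [hc]; exact eq_one_of_le_one cs (hc ▸ hle))
      obtain ⟨j, hj⟩ := cs.exists_rightDescent_of_ne_one hw1
      have hj' : ℓ (w * s j) < ℓ w := hj
      have hwj : ℓ (w * s j) + 1 = ℓ w := by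
        rcases cs.length_mul_simple w j with h | h <;> omega
      rcases cs.length_mul_simple u j with hu | hu
      · -- j-ascent of u : u ≤ w s j
        have hlift : BruhatLE cs u (w * s j) := lift_asc' cs hle hj' (by omega)
        rcases cs.length_mul_simple a j with ha | ha
        · -- j-ascent of a
          rw [r_asc hR hj' (by omega)]
          have e1 : rr R a u ≤ rr R a (w * s j) := IH (w * s j) (by omega) a u hlift
          have e2 := r_nonneg hR (ℓ (w * s j)) (w * s j) le_rfl (a * s j)
          linarith
        · -- j-descent of a
          rw [r_desc hR hj' (by omega)]
          have e1 : rr R a u ≤ rr R a (w * s j) := IH (w * s j) (by omega) a u hlift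
          have e2 : rr R a (w * s j) ≤ rr R (a * s j) (w * s j) :=
            step_antitone hR (ℓ (w * s j)) (w * s j) le_rfl a j (by omega)
          linarith
      · -- j-descent of u : u s j ≤ w s j
        have hlift : BruhatLE cs (u * s j) (w * s j) := lift_desc' cs hle hj' (by omega)
        rcases cs.length_mul_simple a j with ha | ha
        · -- j-ascent of a
          rw [r_asc hR hj' (by omega), r_asc hR (show ℓ (u * s j) < ℓ u by omega) (by omega)]
          have e1 : rr R a (u * s j) ≤ rr R a (w * s j) :=
            IH (w * s j) (by omega) a (u * s j) hlift
          have e2 : rr R (a * s j) (u * s j) ≤ rr R (a * s j) (w * s j) :=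
            IH (w * s j) (by omega) (a * s j) (u * s j) hlift
          linarith
        · -- j-descent of a
          rw [r_desc hR hj' (by omega), r_desc hR (show ℓ (u * s j) < ℓ u by omega) (by omega)]
          exact IH (w * s j) (by omega) (a * s j) (u * s j) hlift

end RFam

end BSize

end

theorem stmt4 {B W : Type*} [Group W] [Finite W] {M : CoxeterMatrix B}
    (cs : CoxeterSystem M W)
    (R : W → W → Polynomial ℤ) (hR : IsRFamily cs R)
    (u v : W) (huv : BruhatLE cs u v) :
    (R 1 u).eval 2 ≤ (R 1 v).eval 2 := by
  have hR' : BSize.IsRFamily' cs R := hR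
  exact BSize.mono hR' (cs.length v) v le_rfl 1 u huv
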